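/- Let α > 0, m > 0, and let β₁, β₂ : ℝ → ℝ be continuous functions such that there is a constant c > 0 with c ≤ β₁(t) ≤ β₂(t) for all t ≥ 0, and such that β₁ is nonincreasing on [0,∞). Let (S₁, I₁, R₁) and (S₂, I₂, R₂) be solutions of the SIR system with transmission rates β₁ and β₂ respectively, with identical initial conditions S₁(0) = S₂(0) = S₀ > 0, I₁(0) = I₂(0) = I₀ > 0, R₁(0) = R₂(0) = R₀ ≥ 0 with S₀ + I₀ + R₀ = m. Then S₁(t) ≥ S₂(t) for every t ≥ 0. -/

import Mathlib

open Set intervalIntegral MeasureTheory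

lemma ftc_cont (g : ℝ → ℝ) (hg : Continuous g) (x : ℝ) :
    HasDerivAt (fun y => ∫ s in (0:ℝ)..y, g s) (g x) x :=
  intervalIntegral.integral_hasDerivAt_right (hg.intervalIntegrable _ _)
    (hg.stronglyMeasurableAtFilter _ _) hg.continuousAt

lemma ode_exp (f g : ℝ → ℝ) (hf : Differentiable ℝ f) (hg : Continuous g)
    (hode : ∀ t, 0 ≤ t → deriv f t = g t * f t) :
    ∀ t, 0 ≤ t → f t = f 0 * Real.exp (∫ s in (0:ℝ)..t, g s) := by
  intro t ht
  set G : ℝ → ℝ := fun x => ∫ s in (0:ℝ)..x, g s with hGdef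
  have hGd : ∀ x : ℝ, HasDerivAt G (g x) x := ftc_cont g hg
  have hGc : Continuous G := by
    have : Differentiable ℝ G := fun x => (hGd x).differentiableAt
    exact this.continuous
  have key : ∀ x ∈ Icc (0:ℝ) t, f x * Real.exp (-G x) = f 0 * Real.exp (-G 0) := by
    apply constant_of_has_deriv_right_zero
    · exact (hf.continuous.mul ((hGc.neg).rexp)).continuousOn
    · intro x hx
      have hx0 : (0:ℝ) ≤ x := hx.1
      have h1 : HasDerivAt (fun y => f y * Real.exp (-G y))
          (deriv f x * Real.exp (-G x) + f x * (Real.exp (-G x) * -g x)) x :=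
        (hf x).hasDerivAt.mul ((hGd x).neg.exp)
      have h2 : deriv f x * Real.exp (-G x) + f x * (Real.exp (-G x) * -g x) = 0 := by
        rw [hode x hx0]; ring
      rw [h2] at h1
      exact h1.hasDerivWithinAt
  have hG0 : G 0 = 0 := intervalIntegral.integral_same
  have := key t ⟨ht, le_rfl⟩
  rw [hG0] at this
  simp only [neg_zero, Real.exp_zero, mul_one] at this
  have hexp : Real.exp (-G t) * Real.exp (G t) = 1 := by
    rw [← Real.exp_add]; simp
  calc f t = f t * (Real.exp (-G t) * Real.exp (G t)) := by rw [hexp]; ring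
    _ = (f t * Real.exp (-G t)) * Real.exp (G t) := by ring
    _ = f 0 * Real.exp (G t) := by rw [this]
lemma ibp_antitone (g v w : ℝ → ℝ) (t N : ℝ) (ht : 0 ≤ t)
    (hg : Continuous g) (hga : AntitoneOn g (Set.Ici 0)) (hg0 : ∀ s, 0 ≤ s → 0 ≤ g s)
    (hv : ∀ s, 0 ≤ s → HasDerivAt v (w s) s) (hw : Continuous w)
    (hv0 : v 0 = 0) (hN : ∀ s ∈ Set.Icc 0 t, -v s ≤ N) (hN0 : 0 ≤ N) :
    g t * v t - g 0 * N ≤ ∫ s in (0:ℝ)..t, g s * w s := by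
  have huIcc : uIcc (0:ℝ) t = Icc 0 t := uIcc_of_le ht
  refine le_of_forall_pos_le_add ?_
  intro δ hδ
  set Wt : ℝ := ∫ s in (0:ℝ)..t, |w s| with hWtdef
  have hWt0 : 0 ≤ Wt := intervalIntegral.integral_nonneg ht (fun x _ => abs_nonneg _)
  set Cd : ℝ := |v t| + N + Wt + 1 with hCddef
  have hCd0 : 0 < Cd := by positivity
  set ρ : ℝ := δ / Cd with hρdef
  have hρ0 : 0 < ρ := div_pos hδ hCd0
  have hunif : UniformContinuousOn g (Icc 0 (t+1)) :=
    isCompact_Icc.uniformContinuousOn_of_continuous hg.continuousOn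
  rw [Metric.uniformContinuousOn_iff] at hunif
  obtain ⟨θ, hθ0, hθ⟩ := hunif ρ hρ0
  set ε : ℝ := min (θ/2) 1 with hεdef
  have hε0 : 0 < ε := lt_min (by linarith) one_pos
  have hε1 : ε ≤ 1 := min_le_right _ _
  have hεθ : ε < θ := lt_of_le_of_lt (min_le_left _ _) (by linarith)
  set B : ℝ → ℝ := fun x => ∫ s in (0:ℝ)..x, g s with hBdef
  have hBd : ∀ x, HasDerivAt B (g x) x := ftc_cont g hg
  set gε : ℝ → ℝ := fun s => (B (s+ε) - B s)/ε with hgεdef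
  have hgεd : ∀ s, HasDerivAt gε ((g (s+ε) - g s)/ε) s := by
    intro s
    have h1 : HasDerivAt (fun y => B (y+ε)) (g (s+ε)) s := by
      have := (hBd (s+ε)).comp s ((hasDerivAt_id s).add_const ε)
      simpa [Function.comp_def] using this
    exact (h1.sub (hBd s)).div_const ε
  have hgεval : ∀ s, gε s = (∫ r in s..(s+ε), g r)/ε := by
    intro s
    have hadj : (∫ r in (0:ℝ)..s, g r) + ∫ r in s..(s+ε), g r = ∫ r in (0:ℝ)..(s+ε), g r :=
      intervalIntegral.integral_add_adjacent_intervals (hg.intervalIntegrable _ _)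
        (hg.intervalIntegrable _ _)
    rw [hgεdef]; simp only [hBdef]; rw [← hadj]; ring
  have hclose : ∀ s ∈ Icc (0:ℝ) t, |gε s - g s| ≤ ρ := by
    intro s hs
    have heq : gε s - g s = (∫ r in s..(s+ε), (g r - g s))/ε := by
      rw [hgεval s, intervalIntegral.integral_sub (hg.intervalIntegrable _ _)
        intervalIntegrable_const, intervalIntegral.integral_const]
      field_simp
      rw [smul_eq_mul]; ring
    rw [heq, abs_div, abs_of_pos hε0, div_le_iff₀ hε0]
    have hb : ∀ x ∈ Set.uIoc s (s+ε), ‖g x - g s‖ ≤ ρ := by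
      intro x hx
      rw [Set.uIoc_of_le (by linarith : s ≤ s+ε)] at hx
      have hmem1 : x ∈ Icc (0:ℝ) (t+1) := ⟨by linarith [hs.1, hx.1], by linarith [hs.2, hx.2]⟩
      have hmem2 : s ∈ Icc (0:ℝ) (t+1) := ⟨hs.1, by linarith [hs.2]⟩
      have hd : dist x s < θ := by
        rw [Real.dist_eq, abs_of_pos (by linarith [hx.1])]
        linarith [hx.2]
      have := hθ x hmem1 s hmem2 hd
      rw [Real.dist_eq] at this
      exact le_of_lt this
    have hni := intervalIntegral.norm_integral_le_of_norm_le_const hb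
    rw [Real.norm_eq_abs] at hni
    calc |∫ r in s..(s+ε), (g r - g s)| ≤ ρ * |s+ε-s| := hni
      _ = ρ * ε := by rw [show s+ε-s = ε by ring, abs_of_pos hε0]
  set gε' : ℝ → ℝ := fun s => (g (s+ε) - g s)/ε with hgε'def
  have hgε'c : Continuous gε' :=
    ((hg.comp (continuous_id.add continuous_const)).sub hg).div_const ε
  have hvcon : ContinuousOn v (Icc 0 t) := fun x hx => (hv x hx.1).continuousAt.continuousWithinAt
  have hgεc : Continuous gε :=
    Differentiable.continuous (fun x => (hgεd x).differentiableAt)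
  have hibp : ∫ s in (0:ℝ)..t, gε s * w s
      = gε t * v t - gε 0 * v 0 - ∫ s in (0:ℝ)..t, gε' s * v s := by
    apply intervalIntegral.integral_mul_deriv_eq_deriv_mul
    · intro x _; exact hgεd x
    · intro x hx; rw [huIcc] at hx; exact hv x hx.1
    · exact hgε'c.intervalIntegrable _ _
    · exact hw.intervalIntegrable _ _
  have hftcgε : ∫ s in (0:ℝ)..t, gε' s = gε t - gε 0 :=
    intervalIntegral.integral_eq_sub_of_hasDerivAt
      (fun x _ => hgεd x) (hgε'c.intervalIntegrable _ _)
  have hbound : ∫ s in (0:ℝ)..t, gε' s * v s ≤ (gε t - gε 0) * (-N) := by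
    have h1 : ∫ s in (0:ℝ)..t, gε' s * v s ≤ ∫ s in (0:ℝ)..t, gε' s * (-N) := by
      apply intervalIntegral.integral_mono_on ht
      · exact ((hgε'c.continuousOn.mul hvcon).mono (le_of_eq huIcc)).intervalIntegrable
      · exact (hgε'c.mul continuous_const).intervalIntegrable _ _
      · intro x hx
        have hd1 : g (x+ε) ≤ g x :=
          hga hx.1 (le_trans hx.1 (by linarith) : x + ε ∈ Ici (0:ℝ)) (by linarith)
        have hd2 : gε' x ≤ 0 := div_nonpos_of_nonpos_of_nonneg (by linarith) (le_of_lt hε0)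
        have hd3 : -N ≤ v x := by linarith [hN x hx]
        exact mul_le_mul_of_nonpos_left hd3 hd2
    calc ∫ s in (0:ℝ)..t, gε' s * v s ≤ ∫ s in (0:ℝ)..t, gε' s * (-N) := h1
      _ = (∫ s in (0:ℝ)..t, gε' s) * (-N) := intervalIntegral.integral_mul_const _ _
      _ = (gε t - gε 0) * (-N) := by rw [hftcgε]
  have hgεt0 : 0 ≤ gε t := by
    rw [hgεval t]
    apply div_nonneg _ (le_of_lt hε0)
    apply intervalIntegral.integral_nonneg (by linarith)
    intro x hx; exact hg0 x (by linarith [hx.1])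
  -- lower bound for mollified integral
  have m1 : gε t * v t - N * gε 0 ≤ ∫ s in (0:ℝ)..t, gε s * w s := by
    rw [hibp, hv0]
    nlinarith [mul_nonneg hN0 hgεt0]
  -- comparison of integrals
  have m2 : |(∫ s in (0:ℝ)..t, g s * w s) - ∫ s in (0:ℝ)..t, gε s * w s| ≤ ρ * Wt := by
    have hsub : (∫ s in (0:ℝ)..t, g s * w s) - ∫ s in (0:ℝ)..t, gε s * w s
        = ∫ s in (0:ℝ)..t, (g s - gε s) * w s := by
      rw [← intervalIntegral.integral_sub (f := fun s => g s * w s) (g := fun s => gε s * w s)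
        ((hg.mul hw).intervalIntegrable _ _) ((hgεc.mul hw).intervalIntegrable _ _)]
      congr 1; funext s; ring
    rw [hsub]
    have habs : |∫ s in (0:ℝ)..t, (g s - gε s) * w s| ≤ ∫ s in (0:ℝ)..t, |(g s - gε s) * w s| :=
      intervalIntegral.abs_integral_le_integral_abs ht
    have hmono2 : ∫ s in (0:ℝ)..t, |(g s - gε s) * w s| ≤ ∫ s in (0:ℝ)..t, ρ * |w s| := by
      apply intervalIntegral.integral_mono_on ht
      · exact (((hg.sub hgεc).mul hw).abs).intervalIntegrable _ _
      · exact (continuous_const.mul hw.abs).intervalIntegrable _ _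
      · intro x hx
        rw [abs_mul]
        apply mul_le_mul_of_nonneg_right _ (abs_nonneg _)
        rw [abs_sub_comm]; exact hclose x hx
    have : ∫ s in (0:ℝ)..t, ρ * |w s| = ρ * Wt := intervalIntegral.integral_const_mul _ _
    linarith
  have hct := hclose t ⟨ht, le_refl t⟩
  have hc0 := hclose 0 ⟨le_refl 0, ht⟩
  have m3 : g t * v t - ρ * |v t| ≤ gε t * v t := by
    have h1 : |(g t - gε t) * v t| ≤ ρ * |v t| := by
      rw [abs_mul]
      apply mul_le_mul_of_nonneg_right _ (abs_nonneg _)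
      rw [abs_sub_comm]; exact hct
    nlinarith [le_abs_self ((g t - gε t) * v t)]
  have m4 : N * gε 0 ≤ N * g 0 + N * ρ := by
    have h1 : gε 0 ≤ g 0 + ρ := by
      have := abs_le.1 hc0
      linarith [this.2]
    nlinarith
  have hρCd : ρ * Cd = δ := div_mul_cancel₀ δ (ne_of_gt hCd0)
  have hfinal : ρ * |v t| + N * ρ + ρ * Wt ≤ δ := by nlinarith
  linarith [m1, abs_le.1 m2, m3, m4]

/-- An SIR model with total population `m`, recovery rate `α`, and transmission
rate `β : ℝ → ℝ` consists of differentiable functions `S, I, R : ℝ → ℝ`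
satisfying, for all `t ≥ 0`:
`I'(t) = β(t)·S(t)·I(t)/m − α·I(t)`, `S'(t) = −β(t)·S(t)·I(t)/m`, `R'(t) = α·I(t)`. -/
def IsSIR (α m : ℝ) (β S I R : ℝ → ℝ) : Prop :=
  Differentiable ℝ S ∧ Differentiable ℝ I ∧ Differentiable ℝ R ∧
  ∀ t : ℝ, 0 ≤ t →
    deriv I t = β t * S t * I t / m - α * I t ∧
    deriv S t = -(β t * S t * I t / m) ∧
    deriv R t = α * I t

lemma sir_sum (α m : ℝ) (β S I R : ℝ → ℝ) (h : IsSIR α m β S I R) :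
    ∀ t, 0 ≤ t → S t + I t + R t = S 0 + I 0 + R 0 := by
  obtain ⟨hS, hI, hR, hode⟩ := h
  intro t ht
  have hder : ∀ x ∈ Ico (0:ℝ) t,
      HasDerivWithinAt (fun s => S s + I s + R s) 0 (Ici x) x := by
    intro x hx
    have h1 : HasDerivAt (fun s => S s + I s + R s)
        (deriv S x + deriv I x + deriv R x) x :=
      ((hS x).hasDerivAt.add (hI x).hasDerivAt).add (hR x).hasDerivAt
    have h2 : deriv S x + deriv I x + deriv R x = 0 := by
      rw [(hode x hx.1).2.1, (hode x hx.1).1, (hode x hx.1).2.2]; ring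
    rw [h2] at h1
    exact h1.hasDerivWithinAt
  exact constant_of_has_deriv_right_zero
    (((hS.continuous.add hI.continuous).add hR.continuous).continuousOn) hder t ⟨ht, le_rfl⟩

lemma sir_facts (α m : ℝ) (hα : 0 < α) (hm : 0 < m) (β S I R : ℝ → ℝ)
    (hβ : Continuous β) (h : IsSIR α m β S I R)
    (hS0 : 0 < S 0) (hI0 : 0 < I 0) :
    (∀ t, 0 ≤ t → 0 < I t) ∧
    (∀ t, 0 ≤ t → S t = S 0 * Real.exp (∫ s in (0:ℝ)..t, -(β s * I s / m))) ∧
    (∀ t, 0 ≤ t → R 0 ≤ R t) := by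
  obtain ⟨hS, hI, hR, hode⟩ := h
  have hIpos : ∀ t, 0 ≤ t → 0 < I t := by
    intro t ht
    have hrep := ode_exp I (fun s => β s * S s / m - α) hI
      (((hβ.mul hS.continuous).div_const m).sub continuous_const)
      (fun s hs => by rw [(hode s hs).1]; ring) t ht
    rw [hrep]
    exact mul_pos hI0 (Real.exp_pos _)
  refine ⟨hIpos, ?_, ?_⟩
  · exact ode_exp S (fun s => -(β s * I s / m)) hS
      ((hβ.mul hI.continuous).div_const m).neg
      (fun s hs => by rw [(hode s hs).2.1]; ring)
  · intro t ht
    have hmono : MonotoneOn R (Ici (0:ℝ)) := by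
      apply monotoneOn_of_deriv_nonneg (convex_Ici 0) hR.continuous.continuousOn
        hR.differentiableOn
      intro x hx
      rw [interior_Ici] at hx
      rw [(hode x (le_of_lt hx)).2.2]
      exact mul_nonneg hα.le (hIpos x (le_of_lt hx)).le
    exact hmono self_mem_Ici ht ht

set_option maxHeartbeats 1600000 in
theorem stmt_1 (α m c : ℝ) (hα : 0 < α) (hm : 0 < m) (hc : 0 < c)
    (β₁ β₂ : ℝ → ℝ) (hβ₁c : Continuous β₁) (hβ₂c : Continuous β₂)
    (hlb : ∀ t : ℝ, 0 ≤ t → c ≤ β₁ t)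
    (hle : ∀ t : ℝ, 0 ≤ t → β₁ t ≤ β₂ t)
    (hmono : AntitoneOn β₁ (Set.Ici (0 : ℝ)))
    (S₁ I₁ R₁ S₂ I₂ R₂ : ℝ → ℝ)
    (h₁ : IsSIR α m β₁ S₁ I₁ R₁) (h₂ : IsSIR α m β₂ S₂ I₂ R₂)
    (S₀ I₀ R₀ : ℝ) (hS₀ : 0 < S₀) (hI₀ : 0 < I₀) (hR₀ : 0 ≤ R₀)
    (hsum : S₀ + I₀ + R₀ = m)
    (hS₁0 : S₁ 0 = S₀) (hS₂0 : S₂ 0 = S₀)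
    (hI₁0 : I₁ 0 = I₀) (hI₂0 : I₂ 0 = I₀)
    (hR₁0 : R₁ 0 = R₀) (hR₂0 : R₂ 0 = R₀) :
    ∀ t : ℝ, 0 ≤ t → S₂ t ≤ S₁ t := by
  have hαne : α ≠ 0 := ne_of_gt hα
  have hmne : m ≠ 0 := ne_of_gt hm
  have hαm : (0:ℝ) < α * m := mul_pos hα hm
  obtain ⟨hI₁pos, hS₁rep, hR₁mono⟩ := sir_facts α m hα hm β₁ S₁ I₁ R₁ hβ₁c h₁
    (by rw [hS₁0]; exact hS₀) (by rw [hI₁0]; exact hI₀)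
  obtain ⟨hI₂pos, hS₂rep, hR₂mono⟩ := sir_facts α m hα hm β₂ S₂ I₂ R₂ hβ₂c h₂
    (by rw [hS₂0]; exact hS₀) (by rw [hI₂0]; exact hI₀)
  obtain ⟨hS₁d, hI₁d, hR₁d, hode₁⟩ := h₁
  obtain ⟨hS₂d, hI₂d, hR₂d, hode₂⟩ := h₂
  have hS₁pos : ∀ t, 0 ≤ t → 0 < S₁ t := by
    intro t ht; rw [hS₁rep t ht, hS₁0]; exact mul_pos hS₀ (Real.exp_pos _)
  have hS₂pos : ∀ t, 0 ≤ t → 0 < S₂ t := by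
    intro t ht; rw [hS₂rep t ht, hS₂0]; exact mul_pos hS₀ (Real.exp_pos _)
  have hsum₁ : ∀ t, 0 ≤ t → S₁ t + I₁ t + R₁ t = m := by
    intro t ht
    rw [sir_sum α m β₁ S₁ I₁ R₁ ⟨hS₁d, hI₁d, hR₁d, hode₁⟩ t ht, hS₁0, hI₁0, hR₁0, hsum]
  have hsum₂ : ∀ t, 0 ≤ t → S₂ t + I₂ t + R₂ t = m := by
    intro t ht
    rw [sir_sum α m β₂ S₂ I₂ R₂ ⟨hS₂d, hI₂d, hR₂d, hode₂⟩ t ht, hS₂0, hI₂0, hR₂0, hsum]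
  have hS₂m : ∀ t, 0 ≤ t → S₂ t ≤ m := by
    intro t ht
    have h1 := hsum₂ t ht
    have h2 := hI₂pos t ht
    have h3 := hR₂mono t ht
    rw [hR₂0] at h3
    linarith
  set v : ℝ → ℝ := fun s => R₂ s - R₁ s with hvdef
  set w : ℝ → ℝ := fun s => α * (I₂ s - I₁ s) with hwdef
  have hv0 : v 0 = 0 := by simp only [hvdef]; rw [hR₁0, hR₂0]; ring
  have hvdiff : Differentiable ℝ v := hR₂d.sub hR₁d
  have hvd : ∀ s, 0 ≤ s → HasDerivAt v (w s) s := by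
    intro s hs
    have h1 : HasDerivAt v (deriv R₂ s - deriv R₁ s) s :=
      (hR₂d s).hasDerivAt.sub (hR₁d s).hasDerivAt
    have h2 : deriv R₂ s - deriv R₁ s = w s := by
      rw [(hode₂ s hs).2.2, (hode₁ s hs).2.2]; simp only [hwdef]; ring
    rwa [h2] at h1
  have hwc : Continuous w := continuous_const.mul (hI₂d.continuous.sub hI₁d.continuous)
  set u : ℝ → ℝ := fun s => Real.log (S₁ s) - Real.log (S₂ s) with hudef
  have hmu : ∀ t, 0 ≤ t → m * u t = ∫ s in (0:ℝ)..t, (β₂ s * I₂ s - β₁ s * I₁ s) := by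
    intro t ht
    have hl₁ : Real.log (S₁ t) = Real.log S₀ + ∫ s in (0:ℝ)..t, -(β₁ s * I₁ s / m) := by
      rw [hS₁rep t ht, hS₁0, Real.log_mul (ne_of_gt hS₀) (Real.exp_ne_zero _), Real.log_exp]
    have hl₂ : Real.log (S₂ t) = Real.log S₀ + ∫ s in (0:ℝ)..t, -(β₂ s * I₂ s / m) := by
      rw [hS₂rep t ht, hS₂0, Real.log_mul (ne_of_gt hS₀) (Real.exp_ne_zero _), Real.log_exp]
    have hint₁ : IntervalIntegrable (fun s => -(β₁ s * I₁ s / m)) volume 0 t :=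
      (((hβ₁c.mul hI₁d.continuous).div_const m).neg).intervalIntegrable _ _
    have hint₂ : IntervalIntegrable (fun s => -(β₂ s * I₂ s / m)) volume 0 t :=
      (((hβ₂c.mul hI₂d.continuous).div_const m).neg).intervalIntegrable _ _
    have key : m * u t
        = ∫ s in (0:ℝ)..t, m * ((-(β₁ s * I₁ s / m)) - (-(β₂ s * I₂ s / m))) := by
      rw [intervalIntegral.integral_const_mul, intervalIntegral.integral_sub hint₁ hint₂]
      simp only [hudef]
      rw [hl₁, hl₂]
      ring
    rw [key]
    apply intervalIntegral.integral_congr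
    intro s _
    field_simp
    ring
  have hu_lb : ∀ t, 0 ≤ t → ∀ μ, 0 ≤ μ → (∀ s ∈ Set.Icc 0 t, -v s ≤ μ) →
      (β₁ t * v t - β₁ 0 * μ) / (α * m) ≤ u t := by
    intro t ht μ hμ hdom
    have hg0 : ∀ s, 0 ≤ s → 0 ≤ β₁ s := fun s hs => le_trans hc.le (hlb s hs)
    have hB := ibp_antitone β₁ v w t μ ht hβ₁c hmono hg0 hvd hwc hv0 hdom hμ
    have hint2 : IntervalIntegrable (fun s => (β₂ s - β₁ s) * I₂ s) volume 0 t :=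
      ((hβ₂c.sub hβ₁c).mul hI₂d.continuous).intervalIntegrable _ _
    have hint3 : IntervalIntegrable (fun s => (1/α) * (β₁ s * w s)) volume 0 t :=
      (continuous_const.mul (hβ₁c.mul hwc)).intervalIntegrable _ _
    have hsplit : (∫ s in (0:ℝ)..t, (β₂ s * I₂ s - β₁ s * I₁ s))
        = (∫ s in (0:ℝ)..t, (β₂ s - β₁ s) * I₂ s)
          + ∫ s in (0:ℝ)..t, (1/α) * (β₁ s * w s) := by
      rw [← intervalIntegral.integral_add hint2 hint3]
      apply intervalIntegral.integral_congr
      intro s _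
      simp only [hwdef]
      field_simp
      ring
    have hA : 0 ≤ ∫ s in (0:ℝ)..t, (β₂ s - β₁ s) * I₂ s := by
      apply intervalIntegral.integral_nonneg ht
      intro x hx
      exact mul_nonneg (by linarith [hle x hx.1]) (hI₂pos x hx.1).le
    have hC : (1/α) * (β₁ t * v t - β₁ 0 * μ) ≤ ∫ s in (0:ℝ)..t, (1/α) * (β₁ s * w s) := by
      rw [intervalIntegral.integral_const_mul]
      apply mul_le_mul_of_nonneg_left hB (by positivity)
    have hmut := hmu t ht
    have hkey : (β₁ t * v t - β₁ 0 * μ) / α ≤ m * u t := by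
      rw [hmut, hsplit]
      have : (β₁ t * v t - β₁ 0 * μ) / α = (1/α) * (β₁ t * v t - β₁ 0 * μ) := by ring
      linarith [hA, hC, this.le, this.ge]
    rw [div_le_iff₀ hαm]
    rw [div_le_iff₀ hα] at hkey
    nlinarith [hkey]
  set K : ℝ := 2 * β₁ 0 / α with hKdef
  have hβ₁0pos : 0 < β₁ 0 := lt_of_lt_of_le hc (hlb 0 le_rfl)
  have hK0 : 0 < K := by rw [hKdef]; positivity
  have hest : ∀ t, 0 ≤ t → ∀ μ, 0 ≤ μ → (∀ s ∈ Set.Icc 0 t, -v s ≤ μ) →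
      α * (-(K * μ) - v t) ≤ deriv v t := by
    intro t ht μ hμ hdom
    have hul := hu_lb t ht μ hμ hdom
    have hS₂p := hS₂pos t ht
    have hS₂le := hS₂m t ht
    have hexpu : S₂ t * Real.exp (u t) = S₁ t := by
      simp only [hudef]
      rw [Real.exp_sub, Real.exp_log (hS₁pos t ht), Real.exp_log hS₂p]
      field_simp
    have h1 : S₂ t * u t ≤ S₁ t - S₂ t := by
      have := Real.add_one_le_exp (u t)
      nlinarith
    have h2 : S₂ t * ((β₁ t * v t - β₁ 0 * μ) / (α * m)) ≤ S₂ t * u t :=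
      mul_le_mul_of_nonneg_left hul hS₂p.le
    have hβt0 : 0 ≤ β₁ t := le_trans hc.le (hlb t ht)
    have hβtle : β₁ t ≤ β₁ 0 := hmono self_mem_Ici ht ht
    have hvtμ : -μ ≤ v t := by have := hdom t ⟨ht, le_rfl⟩; linarith
    have hmm : 0 ≤ m * (β₁ 0 * μ) := mul_nonneg hm.le (mul_nonneg hβ₁0pos.le hμ)
    have hSb : S₂ t * (β₁ 0 * μ) ≤ m * (β₁ 0 * μ) :=
      mul_le_mul_of_nonneg_right hS₂le (mul_nonneg hβ₁0pos.le hμ)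
    have hcore : -(2*m*(β₁ 0 * μ)) ≤ S₂ t * (β₁ t * v t - β₁ 0 * μ) := by
      rcases le_or_gt 0 (v t) with hv | hv
      · have h_a : 0 ≤ S₂ t * (β₁ t * v t) :=
          mul_nonneg hS₂p.le (mul_nonneg hβt0 hv)
        nlinarith [h_a, hSb, hmm]
      · have h_i : β₁ 0 * v t ≤ β₁ t * v t := mul_le_mul_of_nonpos_right hβtle hv.le
        have h_a : S₂ t * (β₁ 0 * v t) ≤ S₂ t * (β₁ t * v t) :=
          mul_le_mul_of_nonneg_left h_i hS₂p.le
        have h_b : m * (β₁ 0 * v t) ≤ S₂ t * (β₁ 0 * v t) :=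
          mul_le_mul_of_nonpos_right hS₂le (mul_nonpos_of_nonneg_of_nonpos hβ₁0pos.le hv.le)
        have h_c : m * (β₁ 0 * (-μ)) ≤ m * (β₁ 0 * v t) :=
          mul_le_mul_of_nonneg_left (mul_le_mul_of_nonneg_left hvtμ hβ₁0pos.le) hm.le
        nlinarith [h_a, h_b, h_c, hSb, hmm]
    have h3 : -(K*μ) ≤ S₂ t * ((β₁ t * v t - β₁ 0 * μ)/(α*m)) := by
      rw [← mul_div_assoc, le_div_iff₀ hαm, hKdef]
      have heq : -(2 * β₁ 0 / α * μ) * (α*m) = -(2*m*(β₁ 0*μ)) := by field_simp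
      rw [heq]
      exact hcore
    have h4 : -(K * μ) ≤ S₁ t - S₂ t := le_trans h3 (le_trans h2 h1)
    have hI21 : I₂ t - I₁ t = (S₁ t - S₂ t) - v t := by
      have e₁ := hsum₁ t ht
      have e₂ := hsum₂ t ht
      simp only [hvdef]
      linarith
    have hdv : deriv v t = α * ((S₁ t - S₂ t) - v t) := by
      rw [(hvd t ht).deriv]
      simp only [hwdef]
      rw [hI21]
    rw [hdv]
    apply mul_le_mul_of_nonneg_left _ hα.le
    linarith
  set h0 : ℝ := 1/(2*K*α) with hh0def
  have hh0pos : 0 < h0 := by rw [hh0def]; positivity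
  have hKh : K * (1 - Real.exp (-(α*h0))) ≤ 1/2 := by
    have h1 : 1 - (α*h0) ≤ Real.exp (-(α*h0)) := by
      have := Real.add_one_le_exp (-(α*h0)); linarith
    have h2 : K*(α*h0) = 1/2 := by
      rw [hh0def]
      field_simp
    have h3 : 1 - Real.exp (-(α*h0)) ≤ α*h0 := by linarith
    have h4 : K * (1 - Real.exp (-(α*h0))) ≤ K*(α*h0) :=
      mul_le_mul_of_nonneg_left h3 hK0.le
    linarith
  have hstep : ∀ t₁, 0 ≤ t₁ → (∀ s ∈ Set.Icc 0 t₁, 0 ≤ v s) →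
      ∀ s ∈ Set.Icc 0 (t₁+h0), 0 ≤ v s := by
    intro t₁ ht₁ hpos
    by_contra hcon
    push_neg at hcon
    obtain ⟨sb, hsb, hsbneg⟩ := hcon
    have hvcont : Continuous v := hvdiff.continuous
    obtain ⟨τ, hτmem, hτmin⟩ := isCompact_Icc.exists_isMinOn
      (Set.nonempty_Icc.2 (by linarith : t₁ ≤ t₁ + h0)) hvcont.continuousOn
    rw [isMinOn_iff] at hτmin
    set μ : ℝ := -v τ with hμdef
    have hsbt₁ : t₁ < sb := by
      by_contra hle'
      push_neg at hle'
      exact absurd (hpos sb ⟨hsb.1, hle'⟩) (not_le.2 hsbneg)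
    have hμpos : 0 < μ := by
      have := hτmin sb ⟨hsbt₁.le, hsb.2⟩
      rw [hμdef]; linarith
    have hτ0 : 0 ≤ τ := le_trans ht₁ hτmem.1
    have hdom : ∀ s ∈ Set.Icc 0 (t₁+h0), -v s ≤ μ := by
      intro s hs
      rcases le_or_gt s t₁ with hcase | hcase
      · have := hpos s ⟨hs.1, hcase⟩; linarith
      · have := hτmin s ⟨hcase.le, hs.2⟩; rw [hμdef]; linarith
    have hode' : ∀ x ∈ Set.Icc 0 (t₁+h0), α * (-(K*μ) - v x) ≤ deriv v x := by
      intro x hx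
      exact hest x hx.1 μ hμpos.le (fun s hs => hdom s ⟨hs.1, le_trans hs.2 hx.2⟩)
    set ψ : ℝ → ℝ := fun s => Real.exp (α*s) * (v s + K*μ) with hψdef
    have hψd : ∀ x, HasDerivAt ψ
        (Real.exp (α*x)*α*(v x + K*μ) + Real.exp (α*x)*(deriv v x)) x := by
      intro x
      have he : HasDerivAt (fun s => Real.exp (α*s)) (Real.exp (α*x)*α) x := by
        have := (Real.hasDerivAt_exp (α*x)).comp x ((hasDerivAt_id x).const_mul α)
        simpa [mul_comm, Function.comp_def] using this
      have hv' : HasDerivAt (fun s => v s + K*μ) (deriv v x) x :=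
        ((hvdiff x).hasDerivAt).add_const _
      exact he.mul hv'
    have hψmono : MonotoneOn ψ (Set.Icc t₁ (t₁+h0)) := by
      apply monotoneOn_of_deriv_nonneg (convex_Icc _ _)
      · exact (Differentiable.continuous (fun x => (hψd x).differentiableAt)).continuousOn
      · exact fun x _ => ((hψd x).differentiableAt).differentiableWithinAt
      · intro x hx
        rw [interior_Icc] at hx
        rw [(hψd x).deriv]
        have hx0 : 0 ≤ x := le_trans ht₁ hx.1.le
        have hdd := hode' x ⟨hx0, hx.2.le⟩
        have hep := Real.exp_pos (α*x)
        nlinarith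
    have hchain : Real.exp (α*t₁) * (K*μ) ≤ Real.exp (α*τ) * ((K-1)*μ) := by
      have hmle : ψ t₁ ≤ ψ τ := hψmono ⟨le_rfl, by linarith⟩ hτmem hτmem.1
      have h2 : ψ t₁ = Real.exp (α*t₁)*(v t₁ + K*μ) := rfl
      have h3 : 0 ≤ v t₁ := hpos t₁ ⟨ht₁, le_rfl⟩
      have h4 : ψ τ = Real.exp (α*τ)*((K-1)*μ) := by
        simp only [hψdef]
        have : v τ = -μ := by rw [hμdef]; ring
        rw [this]; ring
      rw [h2, h4] at hmle
      have hep := Real.exp_pos (α*t₁)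
      nlinarith
    have hexpτ : Real.exp (α*τ) ≤ Real.exp (α*t₁) * Real.exp (α*h0) := by
      rw [← Real.exp_add]
      apply Real.exp_le_exp.2
      have := hτmem.2
      nlinarith
    rcases le_or_gt (K-1) 0 with hK1 | hK1
    · have hr1 : Real.exp (α*τ) * ((K-1)*μ) ≤ 0 :=
        mul_nonpos_of_nonneg_of_nonpos (Real.exp_pos _).le
          (mul_nonpos_of_nonpos_of_nonneg hK1 hμpos.le)
      have hr2 : 0 < Real.exp (α*t₁) * (K*μ) :=
        mul_pos (Real.exp_pos _) (mul_pos hK0 hμpos)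
      linarith
    · have hstep1 : Real.exp (α*τ) * ((K-1)*μ)
          ≤ (Real.exp (α*t₁) * Real.exp (α*h0)) * ((K-1)*μ) :=
        mul_le_mul_of_nonneg_right hexpτ (by positivity)
      have hstep2 : Real.exp (α*t₁) * (K*μ)
          ≤ (Real.exp (α*t₁) * Real.exp (α*h0)) * ((K-1)*μ) := le_trans hchain hstep1
      have h5 : K ≤ Real.exp (α*h0) * (K-1) := by
        have e1 := Real.exp_pos (α*t₁)
        nlinarith [hstep2, hμpos, mul_pos e1 hμpos]
      have h6 : Real.exp (-(α*h0)) * K ≤ K - 1 := by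
        have hmul := mul_le_mul_of_nonneg_left h5 (Real.exp_pos (-(α*h0))).le
        rw [← mul_assoc, ← Real.exp_add] at hmul
        simpa using hmul
      nlinarith [hKh, h6]
  have hind : ∀ n : ℕ, ∀ s ∈ Set.Icc 0 ((n:ℝ)*h0), 0 ≤ v s := by
    intro n
    induction n with
    | zero =>
      intro s hs
      have h1 : s = 0 := le_antisymm (by simpa using hs.2) hs.1
      rw [h1, hv0]
    | succ n ih =>
      have hs' := hstep ((n:ℝ)*h0) (by positivity) ih
      intro s hs
      apply hs' s
      refine ⟨hs.1, ?_⟩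
      have := hs.2
      push_cast at this ⊢
      linarith
  intro t ht
  have hvt : ∀ s ∈ Set.Icc 0 t, 0 ≤ v s := by
    obtain ⟨n, hn⟩ := exists_nat_ge (t / h0)
    intro s hs
    apply hind n
    refine ⟨hs.1, ?_⟩
    have htn : t ≤ n * h0 := by
      rw [div_le_iff₀ hh0pos] at hn
      linarith
    linarith [hs.2]
  have hul := hu_lb t ht 0 le_rfl (fun s hs => by linarith [hvt s hs])
  have hut : 0 ≤ u t := by
    refine le_trans ?_ hul
    apply div_nonneg _ hαm.le
    have hv1 := hvt t ⟨ht, le_rfl⟩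
    have hβt0 : 0 ≤ β₁ t := le_trans hc.le (hlb t ht)
    nlinarith
  have hexpu : S₂ t * Real.exp (u t) = S₁ t := by
    simp only [hudef]
    rw [Real.exp_sub, Real.exp_log (hS₁pos t ht), Real.exp_log (hS₂pos t ht),
      mul_comm, div_mul_cancel₀ _ (hS₂pos t ht).ne']
  have hone : 1 ≤ Real.exp (u t) := by
    simpa using Real.exp_le_exp.2 hut
  nlinarith [hS₂pos t ht, hexpu, hone]
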